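/- arXiv:1007.2482 — 2 statements merged into one kernel-verified Lean document; each statement's English description precedes it below -/
import Mathlib

section
/- Let Ω ⊂ ℝ^N be bounded and W : Ω → [0,∞) integrable. Suppose for every η > 0 there exists s₀ > 0 such that for all y ∈ ∂Ω, N ∫₀^{s₀} (∫_{Ω ∩ B_r(y)} W dx) dr/r^{N+1} ≤ η. Then for every ε > 0 there exists δ > 0 such that for every Borel set E ⊂ Ω with |E| ≤ δ and every y ∈ ∂Ω, ∫_E W(x)/|x−y|^N dx ≤ ε. -/
open MeasureTheory Filter Set
open scoped ENNReal NNReal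

private lemma stmt2_L1 {N : ℕ} (hN : 0 < N) {d s₀ : ℝ} (hd : 0 < d) (hds : d < s₀) :
    ENNReal.ofReal ((d ^ N)⁻¹) ≤
      (N : ℝ≥0∞) * (∫⁻ r in Set.Ioo d s₀, (ENNReal.ofReal (r ^ (N + 1)))⁻¹)
        + ENNReal.ofReal ((s₀ ^ N)⁻¹) := by
  have hs₀ : 0 < s₀ := hd.trans hds
  have h1 : ∫⁻ r in Set.Ioo d s₀, (ENNReal.ofReal (r ^ (N + 1)))⁻¹
      = ∫⁻ r in Set.Ioo d s₀, ENNReal.ofReal ((r ^ (N + 1))⁻¹) := by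
    refine setLIntegral_congr_fun measurableSet_Ioo (fun r hr => ?_)
    rw [ENNReal.ofReal_inv_of_pos (pow_pos (hd.trans hr.1) _)]
  have hcont : ContinuousOn (fun r : ℝ => (r ^ (N + 1))⁻¹) (Set.Icc d s₀) := by
    refine ContinuousOn.inv₀ (by fun_prop) fun r hr => ?_
    exact (pow_pos (hd.trans_le hr.1) _).ne'
  have hint : IntegrableOn (fun r : ℝ => (r ^ (N + 1))⁻¹) (Set.Ioo d s₀) :=
    (hcont.integrableOn_Icc).mono_set Set.Ioo_subset_Icc_self
  have h2 : ∫⁻ r in Set.Ioo d s₀, ENNReal.ofReal ((r ^ (N + 1))⁻¹)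
      = ENNReal.ofReal (∫ r in Set.Ioo d s₀, (r ^ (N + 1))⁻¹) := by
    rw [← ofReal_integral_eq_lintegral_ofReal hint]
    exact (ae_restrict_iff' measurableSet_Ioo).mpr
      (ae_of_all _ fun r hr => by have := hd.trans hr.1; positivity)
  have hz : Set.EqOn (fun r : ℝ => (r ^ (N + 1))⁻¹) (fun r : ℝ => r ^ (-((N:ℤ) + 1)))
      (Set.uIcc d s₀) := by
    intro r _
    have hc : ((N:ℤ) + 1) = ((N + 1 : ℕ) : ℤ) := by push_cast; ring
    simp only [zpow_neg, hc, zpow_natCast]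
  have h3 : ∫ r in Set.Ioo d s₀, (r ^ (N + 1))⁻¹
      = ((d:ℝ) ^ N)⁻¹ / N - (s₀ ^ N)⁻¹ / N := by
    rw [← integral_Ioc_eq_integral_Ioo, ← intervalIntegral.integral_of_le hds.le,
      intervalIntegral.integral_congr hz,
      integral_zpow (Or.inr ⟨by omega, Set.notMem_uIcc_of_lt hd hs₀⟩)]
    have h4 : (-((N:ℤ) + 1) + 1) = -(N:ℤ) := by ring
    rw [h4, zpow_neg, zpow_neg, zpow_natCast, zpow_natCast]
    have hN' : (N:ℝ) ≠ 0 := by exact_mod_cast hN.ne'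
    push_cast
    field_simp
    rw [show -((N:ℝ) + 1) + 1 = -N by ring, mul_div_assoc, div_neg, div_self hN']
    ring
  have hJnn : (0:ℝ) ≤ ∫ r in Set.Ioo d s₀, (r ^ (N + 1))⁻¹ := by
    rw [h3]
    have h5 : (s₀ ^ N)⁻¹ ≤ (d ^ N)⁻¹ :=
      inv_anti₀ (pow_pos hd _) (pow_le_pow_left₀ hd.le hds.le _)
    rw [sub_nonneg]
    gcongr
  rw [h1, h2]
  have key : ((d:ℝ) ^ N)⁻¹ = N * (∫ r in Set.Ioo d s₀, (r ^ (N + 1))⁻¹) + (s₀ ^ N)⁻¹ := by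
    rw [h3]
    have hN' : (N:ℝ) ≠ 0 := by exact_mod_cast hN.ne'
    field_simp
    ring
  calc ENNReal.ofReal ((d ^ N)⁻¹)
      = ENNReal.ofReal (N * (∫ r in Set.Ioo d s₀, (r ^ (N + 1))⁻¹) + (s₀ ^ N)⁻¹) := by rw [key]
    _ ≤ ENNReal.ofReal (N * (∫ r in Set.Ioo d s₀, (r ^ (N + 1))⁻¹)) + ENNReal.ofReal ((s₀ ^ N)⁻¹) :=
        ENNReal.ofReal_add_le
    _ = (N : ℝ≥0∞) * ENNReal.ofReal (∫ r in Set.Ioo d s₀, (r ^ (N + 1))⁻¹)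
          + ENNReal.ofReal ((s₀ ^ N)⁻¹) := by
        rw [ENNReal.ofReal_mul (by positivity), ENNReal.ofReal_natCast]

theorem stmt2 {N : ℕ} (Ω : Set (EuclideanSpace ℝ (Fin N)))
    (hΩ : Bornology.IsBounded Ω) (hΩm : MeasurableSet Ω)
    (W : EuclideanSpace ℝ (Fin N) → ℝ) (hWm : Measurable W) (hWnn : ∀ x ∈ Ω, 0 ≤ W x)
    (hWint : IntegrableOn W Ω)
    (hsmall : ∀ η > (0:ℝ), ∃ s₀ > (0:ℝ), ∀ y ∈ frontier Ω,
      (N : ℝ≥0∞) * ∫⁻ r in Set.Ioo (0:ℝ) s₀,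
          (∫⁻ x in Ω ∩ Metric.ball y r, ENNReal.ofReal (W x)) / ENNReal.ofReal (r ^ (N + 1))
        ≤ ENNReal.ofReal η) :
    ∀ ε > (0:ℝ), ∃ δ > (0:ℝ), ∀ E : Set (EuclideanSpace ℝ (Fin N)),
      E ⊆ Ω → MeasurableSet E → volume E ≤ ENNReal.ofReal δ →
      ∀ y ∈ frontier Ω,
        ∫⁻ x in E, ENNReal.ofReal (W x) / ENNReal.ofReal (dist x y ^ N)
          ≤ ENNReal.ofReal ε := by
  intro ε hε
  rcases Nat.eq_zero_or_pos N with hN0 | hN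
  · refine ⟨1, one_pos, fun E _ _ _ y hy => absurd hy ?_⟩
    subst hN0
    haveI : Subsingleton (EuclideanSpace ℝ (Fin 0)) := inferInstance
    rcases Set.eq_empty_or_nonempty Ω with h | h
    · simp [h]
    · simp [h.eq_univ]
  obtain ⟨s₀, hs₀, hsm⟩ := hsmall (ε/2) (by positivity)
  haveI : Nonempty (Fin N) := ⟨⟨0, hN⟩⟩
  haveI : Nontrivial (EuclideanSpace ℝ (Fin N)) := inferInstance
  set oW : EuclideanSpace ℝ (Fin N) → ℝ≥0∞ := fun x => ENNReal.ofReal (W x) with hoW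
  -- absolute continuity of the integral of W
  have hfin : ∫⁻ x, Ω.indicator oW x ∂volume ≠ ⊤ := by
    rw [lintegral_indicator hΩm]
    refine ne_of_lt (lt_of_le_of_lt ?_ hWint.2)
    exact lintegral_mono fun x => Real.ofReal_le_enorm (W x)
  have hε'pos : ENNReal.ofReal (ε / 2 * s₀ ^ N) ≠ 0 :=
    (ENNReal.ofReal_pos.mpr (by positivity)).ne'
  obtain ⟨δ', hδ'pos, hδ'⟩ := exists_pos_setLIntegral_lt_of_measure_lt hfin hε'pos
  have hδ'top : min δ' 1 ≠ ⊤ := ne_top_of_le_ne_top ENNReal.one_ne_top (min_le_right _ _)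
  have hδmin : 0 < min δ' 1 := lt_min hδ'pos zero_lt_one
  refine ⟨(min δ' 1).toReal / 2, by
    have := ENNReal.toReal_pos hδmin.ne' hδ'top
    positivity, ?_⟩
  intro E hEΩ hEm hEvol y hy
  have hEδ : volume E < δ' := by
    have ht : 0 < (min δ' 1).toReal := ENNReal.toReal_pos hδmin.ne' hδ'top
    have h1 : ENNReal.ofReal ((min δ' 1).toReal / 2) < ENNReal.ofReal ((min δ' 1).toReal) :=
      (ENNReal.ofReal_lt_ofReal_iff_of_nonneg (by positivity)).mpr (by linarith)
    rw [ENNReal.ofReal_toReal hδ'top] at h1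
    exact lt_of_le_of_lt hEvol (h1.trans_le (min_le_left _ _))
  have hEint : ∫⁻ x in E, oW x ≤ ENNReal.ofReal (ε / 2 * s₀ ^ N) := by
    have h := (hδ' E hEδ).le
    rwa [setLIntegral_congr_fun hEm
      (fun x hx => Set.indicator_of_mem (hEΩ hx) oW)] at h
  -- the kernel majorant
  set F : EuclideanSpace ℝ (Fin N) → ℝ → ℝ≥0∞ := fun x r =>
    ((Ω ∩ Metric.ball y r).indicator oW x) / ENNReal.ofReal (r ^ (N + 1)) with hF
  have hFm : Measurable (Function.uncurry F) := by
    have hS : MeasurableSet {p : EuclideanSpace ℝ (Fin N) × ℝ | p.1 ∈ Ω ∧ dist p.1 y < p.2} :=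
      MeasurableSet.inter (hΩm.preimage measurable_fst)
        (isOpen_lt (continuous_fst.dist continuous_const) continuous_snd).measurableSet
    have heq : Function.uncurry F
        = fun p : EuclideanSpace ℝ (Fin N) × ℝ =>
          ({p : EuclideanSpace ℝ (Fin N) × ℝ | p.1 ∈ Ω ∧ dist p.1 y < p.2}.indicator
            (fun q => oW q.1) p) / ENNReal.ofReal (p.2 ^ (N + 1)) := rfl
    rw [heq]
    exact (Measurable.indicator ((hWm.comp measurable_fst).ennreal_ofReal) hS).div
      ((measurable_snd.pow_const (N + 1)).ennreal_ofReal)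
  have hmeas1 : Measurable fun x => ∫⁻ r in Set.Ioo 0 s₀, F x r :=
    Measurable.lintegral_prod_right' hFm
  -- pointwise bound
  have P : ∀ x ∈ E, x ≠ y →
      oW x / ENNReal.ofReal (dist x y ^ N)
        ≤ (N : ℝ≥0∞) * (∫⁻ r in Set.Ioo 0 s₀, F x r) + oW x / ENNReal.ofReal (s₀ ^ N) := by
    intro x hxE hxy
    set d : ℝ := dist x y with hdd
    have hd : 0 < d := dist_pos.mpr hxy
    by_cases hds : d < s₀
    · have hsub : Set.Ioo d s₀ ⊆ Set.Ioo 0 s₀ := fun r hr => ⟨hd.trans hr.1, hr.2⟩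
      have hIle : (∫⁻ r in Set.Ioo d s₀, F x r) ≤ ∫⁻ r in Set.Ioo 0 s₀, F x r :=
        lintegral_mono_set hsub
      have hI : (∫⁻ r in Set.Ioo d s₀, F x r)
          = oW x * ∫⁻ r in Set.Ioo d s₀, (ENNReal.ofReal (r ^ (N + 1)))⁻¹ := by
        rw [← lintegral_const_mul' _ _ (by exact ENNReal.ofReal_ne_top)]
        refine setLIntegral_congr_fun measurableSet_Ioo (fun r hr => ?_)
        have hmem : x ∈ Ω ∩ Metric.ball y r :=
          ⟨hEΩ hxE, by simpa [Metric.mem_ball] using hr.1⟩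
        show (Ω ∩ Metric.ball y r).indicator oW x / ENNReal.ofReal (r ^ (N + 1)) = _
        rw [Set.indicator_of_mem hmem]
        exact div_eq_mul_inv _ _
      calc oW x / ENNReal.ofReal (d ^ N)
          = oW x * ENNReal.ofReal ((d ^ N)⁻¹) := by
            rw [div_eq_mul_inv, ENNReal.ofReal_inv_of_pos (pow_pos hd _)]
        _ ≤ oW x * ((N : ℝ≥0∞) * (∫⁻ r in Set.Ioo d s₀, (ENNReal.ofReal (r ^ (N + 1)))⁻¹)
              + ENNReal.ofReal ((s₀ ^ N)⁻¹)) := mul_le_mul_right (stmt2_L1 hN hd hds) _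
        _ = (N : ℝ≥0∞) * (oW x * ∫⁻ r in Set.Ioo d s₀, (ENNReal.ofReal (r ^ (N + 1)))⁻¹)
              + oW x * ENNReal.ofReal ((s₀ ^ N)⁻¹) := by ring
        _ ≤ (N : ℝ≥0∞) * (∫⁻ r in Set.Ioo 0 s₀, F x r) + oW x / ENNReal.ofReal (s₀ ^ N) := by
            refine add_le_add (mul_le_mul_right (hI ▸ hIle) _) (le_of_eq ?_)
            rw [div_eq_mul_inv, ENNReal.ofReal_inv_of_pos (pow_pos hs₀ _)]
    · push_neg at hds
      have h1 : oW x / ENNReal.ofReal (d ^ N) ≤ oW x / ENNReal.ofReal (s₀ ^ N) := by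
        gcongr
      exact h1.trans le_add_self
  -- main estimate
  have hswap : (∫⁻ x in E, ∫⁻ r in Set.Ioo 0 s₀, F x r)
      = ∫⁻ r in Set.Ioo 0 s₀, ∫⁻ x in E, F x r :=
    lintegral_lintegral_swap hFm.aemeasurable
  have hA : (N : ℝ≥0∞) * (∫⁻ x in E, ∫⁻ r in Set.Ioo 0 s₀, F x r) ≤ ENNReal.ofReal (ε / 2) := by
    rw [hswap]
    refine le_trans (mul_le_mul_right ?_ _) (hsm y hy)
    refine lintegral_mono_ae ((ae_restrict_iff' measurableSet_Ioo).mpr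
      (ae_of_all _ fun r hr => ?_))
    have hrpos : (0:ℝ) < r ^ (N + 1) := pow_pos hr.1 _
    have hne : (ENNReal.ofReal (r ^ (N + 1)))⁻¹ ≠ ⊤ := by
      simp only [Ne, ENNReal.inv_eq_top]
      exact (ENNReal.ofReal_pos.mpr hrpos).ne'
    calc ∫⁻ x in E, F x r
        = (∫⁻ x in E, (Ω ∩ Metric.ball y r).indicator oW x) * (ENNReal.ofReal (r ^ (N + 1)))⁻¹ := by
          rw [← lintegral_mul_const' _ _ hne]
          refine setLIntegral_congr_fun hEm (fun x hx => ?_)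
          show (Ω ∩ Metric.ball y r).indicator oW x / ENNReal.ofReal (r ^ (N + 1)) = _
          exact div_eq_mul_inv _ _
      _ ≤ (∫⁻ x in Ω ∩ Metric.ball y r, oW x) * (ENNReal.ofReal (r ^ (N + 1)))⁻¹ := by
          refine mul_le_mul_left ?_ _
          rw [lintegral_indicator (hΩm.inter measurableSet_ball),
            Measure.restrict_restrict (hΩm.inter measurableSet_ball)]
          exact lintegral_mono' (Measure.restrict_mono Set.inter_subset_left le_rfl) le_rfl
      _ = (∫⁻ x in Ω ∩ Metric.ball y r, oW x) / ENNReal.ofReal (r ^ (N + 1)) :=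
          (div_eq_mul_inv _ _).symm
  have hB : (∫⁻ x in E, oW x / ENNReal.ofReal (s₀ ^ N)) ≤ ENNReal.ofReal (ε / 2) := by
    have hc : (ENNReal.ofReal (s₀ ^ N))⁻¹ ≠ ⊤ := by
      simp only [Ne, ENNReal.inv_eq_top]
      exact (ENNReal.ofReal_pos.mpr (pow_pos hs₀ _)).ne'
    calc (∫⁻ x in E, oW x / ENNReal.ofReal (s₀ ^ N))
        = (∫⁻ x in E, oW x) * (ENNReal.ofReal (s₀ ^ N))⁻¹ := by
          rw [← lintegral_mul_const' _ _ hc]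
          simp_rw [div_eq_mul_inv]
      _ ≤ ENNReal.ofReal (ε / 2 * s₀ ^ N) * (ENNReal.ofReal (s₀ ^ N))⁻¹ :=
          mul_le_mul_left hEint _
      _ = ENNReal.ofReal (ε / 2 * s₀ ^ N) / ENNReal.ofReal (s₀ ^ N) :=
          (div_eq_mul_inv _ _).symm
      _ = ENNReal.ofReal (ε / 2 * s₀ ^ N / s₀ ^ N) := by
          rw [ENNReal.ofReal_div_of_pos (pow_pos hs₀ _)]
      _ = ENNReal.ofReal (ε / 2) := by
          congr 1
          field_simp
  calc ∫⁻ x in E, oW x / ENNReal.ofReal (dist x y ^ N)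
      ≤ ∫⁻ x in E, ((N : ℝ≥0∞) * (∫⁻ r in Set.Ioo 0 s₀, F x r)
          + oW x / ENNReal.ofReal (s₀ ^ N)) := by
        refine lintegral_mono_ae ?_
        have h1 : ∀ᵐ x ∂(volume.restrict E), x ≠ y :=
          ae_restrict_of_ae (by
            rw [ae_iff]
            simpa using measure_singleton y)
        have h2 : ∀ᵐ x ∂(volume.restrict E), x ∈ E := ae_restrict_mem hEm
        filter_upwards [h1, h2] with x hxy hxE
        exact P x hxE hxy
    _ = (N : ℝ≥0∞) * (∫⁻ x in E, ∫⁻ r in Set.Ioo 0 s₀, F x r)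
          + ∫⁻ x in E, oW x / ENNReal.ofReal (s₀ ^ N) := by
        rw [lintegral_add_left (hmeas1.const_mul _), lintegral_const_mul _ hmeas1]
    _ ≤ ENNReal.ofReal (ε / 2) + ENNReal.ofReal (ε / 2) := add_le_add hA hB
    _ = ENNReal.ofReal ε := by
        rw [← ENNReal.ofReal_add (by positivity) (by positivity), add_halves]
end

section
/- With the capacity C defined as above from a lower semicontinuous kernel K : Y → [0,∞] (C(E) = sup{μ(E) : μ(Eᶜ)=0, ∫K dμ ≤ 1}), for any two Borel sets E₁, E₂ ⊂ Y one has C(E₁ ∪ E₂) = max{C(E₁), C(E₂)}. -/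
open MeasureTheory Filter Set
open scoped ENNReal

theorem stmt6 {Y : Type*} [MetricSpace Y] [CompactSpace Y]
    [MeasurableSpace Y] [BorelSpace Y]
    (K : Y → ℝ≥0∞) (hK : LowerSemicontinuous K)
    (C : Set Y → ℝ≥0∞)
    (hC : ∀ E : Set Y, C E = sSup {c : ℝ≥0∞ | ∃ μ : Measure Y, IsFiniteMeasure μ ∧
        μ Eᶜ = 0 ∧ (∫⁻ y, K y ∂μ) ≤ 1 ∧ c = μ E})
    (E₁ E₂ : Set Y) (h₁ : MeasurableSet E₁) (h₂ : MeasurableSet E₂) :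
    C (E₁ ∪ E₂) = max (C E₁) (C E₂) := by
  -- auxiliary: any admissible measure gives a lower bound on C E
  have aux : ∀ (E : Set Y) (ν : Measure Y), IsFiniteMeasure ν → ν Eᶜ = 0 →
      (∫⁻ y, K y ∂ν) ≤ 1 → ν E ≤ C E := by
    intro E ν hfin h0 hint
    rw [hC]
    exact le_sSup ⟨ν, hfin, h0, hint, rfl⟩
  -- key lemma: scaled bound
  have key : ∀ (E : Set Y) (ν : Measure Y), IsFiniteMeasure ν → ν Eᶜ = 0 →
      (∫⁻ y, K y ∂ν) ≤ 1 → ν E ≤ (∫⁻ y, K y ∂ν) * C E ∨ C E = ⊤ := by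
    intro E ν hfin h0 hint
    set a := ∫⁻ y, K y ∂ν with ha
    have haT : a ≠ ⊤ := ne_top_of_le_ne_top ENNReal.one_ne_top hint
    by_cases ha0 : a = 0
    · by_cases hνE : ν E = 0
      · exact Or.inl (by simp [hνE])
      · right
        by_contra hCtop
        obtain ⟨n, hn⟩ := ENNReal.exists_nat_gt (ENNReal.div_lt_top hCtop hνE).ne
        have hadm : (n : ℝ≥0∞) • ν E ≤ C E := by
          have hfin' : IsFiniteMeasure ((n : ℝ≥0∞) • ν) := by
            constructor
            rw [Measure.smul_apply, smul_eq_mul]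
            exact ENNReal.mul_lt_top (by simp) (measure_lt_top ν _)
          have := aux E ((n : ℝ≥0∞) • ν) hfin' (by simp [h0])
            (by rw [lintegral_smul_measure, ← ha, ha0]; simp)
          simpa using this
        have : C E < (n : ℝ≥0∞) * ν E :=
          (ENNReal.div_lt_iff (Or.inl hνE) (Or.inl (measure_ne_top ν E))).mp hn
        exact absurd hadm (by rw [smul_eq_mul]; exact not_le.mpr this)
    · left
      have hinv : IsFiniteMeasure (a⁻¹ • ν) := by
        constructor
        rw [Measure.smul_apply, smul_eq_mul]
        exact ENNReal.mul_lt_top (ENNReal.inv_lt_top.mpr (pos_iff_ne_zero.mpr ha0))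
          (measure_lt_top ν _)
      have hle : a⁻¹ * ν E ≤ C E := by
        have := aux E (a⁻¹ • ν) hinv (by simp [h0])
          (by rw [lintegral_smul_measure, ← ha, smul_eq_mul, ENNReal.inv_mul_cancel ha0 haT])
        simpa using this
      calc ν E = a * (a⁻¹ * ν E) := by
            rw [← mul_assoc, ENNReal.mul_inv_cancel ha0 haT, one_mul]
        _ ≤ a * C E := mul_le_mul_right hle a
  apply le_antisymm
  · rw [hC]
    apply sSup_le
    rintro c ⟨μ, hfin, hcomp, hint, rfl⟩
    -- split μ into restrictions
    set μ₁ := μ.restrict E₁ with hμ₁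
    set μ₂ := μ.restrict (E₂ \ E₁) with hμ₂
    have hm2 : MeasurableSet (E₂ \ E₁) := h₂.diff h₁
    have hdisj : Disjoint E₁ (E₂ \ E₁) := disjoint_sdiff_self_right
    have hsplit : μ (E₁ ∪ E₂) = μ₁ E₁ + μ₂ E₂ := by
      have h1 : μ₁ E₁ = μ E₁ := by rw [hμ₁, Measure.restrict_apply h₁, inter_self]
      have h2 : μ₂ E₂ = μ (E₂ \ E₁) := by
        rw [hμ₂, Measure.restrict_apply h₂, Set.inter_eq_right.mpr diff_subset]
      rw [h1, h2, ← measure_union hdisj hm2, union_diff_self]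
    have hfin1 : IsFiniteMeasure μ₁ := by
      constructor; exact lt_of_le_of_lt (Measure.restrict_le_self _) (measure_lt_top μ _)
    have hfin2 : IsFiniteMeasure μ₂ := by
      constructor; exact lt_of_le_of_lt (Measure.restrict_le_self _) (measure_lt_top μ _)
    have h01 : μ₁ E₁ᶜ = 0 := by
      rw [hμ₁, Measure.restrict_apply h₁.compl]
      simp [compl_inter_self]
    have h02 : μ₂ E₂ᶜ = 0 := by
      rw [hμ₂, Measure.restrict_apply h₂.compl]
      have : E₂ᶜ ∩ (E₂ \ E₁) = ∅ := by
        ext x; simp; tauto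
      simp [this]
    set a := ∫⁻ y, K y ∂μ₁ with hA
    set b := ∫⁻ y, K y ∂μ₂ with hB
    have hab : a + b ≤ 1 := by
      have hsum : a + b = ∫⁻ y, K y ∂(μ.restrict (E₁ ∪ (E₂ \ E₁))) := by
        rw [hA, hB, hμ₁, hμ₂, ← lintegral_union hm2 hdisj]
      have hle : (∫⁻ y, K y ∂(μ.restrict (E₁ ∪ (E₂ \ E₁)))) ≤ ∫⁻ y, K y ∂μ :=
        lintegral_mono' (Measure.restrict_le_self) le_rfl
      calc a + b = _ := hsum
        _ ≤ ∫⁻ y, K y ∂μ := hle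
        _ ≤ 1 := hint
    have ha1 : a ≤ 1 := le_trans (le_add_right le_rfl) hab
    have hb1 : b ≤ 1 := le_trans (le_add_left le_rfl) hab
    rcases key E₁ μ₁ hfin1 h01 ha1 with hk1 | hk1
    swap
    · calc μ (E₁ ∪ E₂) ≤ ⊤ := le_top
        _ ≤ max (C E₁) (C E₂) := by rw [← hk1]; exact le_max_left _ _
    rcases key E₂ μ₂ hfin2 h02 hb1 with hk2 | hk2
    swap
    · calc μ (E₁ ∪ E₂) ≤ ⊤ := le_top
        _ ≤ max (C E₁) (C E₂) := by rw [← hk2]; exact le_max_right _ _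
    calc μ (E₁ ∪ E₂) = μ₁ E₁ + μ₂ E₂ := hsplit
      _ ≤ a * C E₁ + b * C E₂ := add_le_add hk1 hk2
      _ ≤ a * max (C E₁) (C E₂) + b * max (C E₁) (C E₂) :=
          add_le_add (mul_le_mul_right (le_max_left _ _) a)
            (mul_le_mul_right (le_max_right _ _) b)
      _ = (a + b) * max (C E₁) (C E₂) := (add_mul a b _).symm
      _ ≤ 1 * max (C E₁) (C E₂) := mul_le_mul_left hab _
      _ = max (C E₁) (C E₂) := one_mul _
  · apply max_le
    · rw [hC E₁]
      apply sSup_le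
      rintro c ⟨μ, hfin, hcomp, hint, rfl⟩
      have h0 : μ (E₁ ∪ E₂)ᶜ = 0 :=
        measure_mono_null (compl_subset_compl.mpr subset_union_left) hcomp
      exact le_trans (measure_mono subset_union_left) (aux _ μ hfin h0 hint)
    · rw [hC E₂]
      apply sSup_le
      rintro c ⟨μ, hfin, hcomp, hint, rfl⟩
      have h0 : μ (E₁ ∪ E₂)ᶜ = 0 :=
        measure_mono_null (compl_subset_compl.mpr subset_union_right) hcomp
      exact le_trans (measure_mono subset_union_right) (aux _ μ hfin h0 hint)
end
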